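/- There exists a constant c > 0 such that for every connected finite simple graph G on n vertices with nonnegative integer edge weights w and every integer k with 3 ≤ k ≤ n, there exists a set S of exactly k vertices of G such that G[S] is connected and σ*_{k,w}(G) ≤ c · min{ n^{2/3}, n²/k², k } · σ_w(G[S]). -/

import Mathlib

open Finset

variable {V : Type*}

noncomputable def graphDensity [Fintype V] (G : SimpleGraph V) : ℝ :=
  2 * G.edgeSet.ncard / Fintype.card V

noncomputable def setDensity (G : SimpleGraph V) (A : Set V) : ℝ :=
  2 * (G.induce A).edgeSet.ncard / A.ncard

noncomputable def indDensity (G : SimpleGraph V) (S : Finset V) : ℝ :=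
  2 * (G.induce (S : Set V)).edgeSet.ncard / S.card

noncomputable def subDensity {G : SimpleGraph V} (H : G.Subgraph) : ℝ :=
  2 * H.edgeSet.ncard / H.verts.ncard

noncomputable def maxKDensity (G : SimpleGraph V) (k : ℕ) : ℝ :=
  sSup {x : ℝ | ∃ H : G.Subgraph, H.verts.ncard = k ∧ x = subDensity H}

noncomputable def maxConnKDensity (G : SimpleGraph V) (k : ℕ) : ℝ :=
  sSup {x : ℝ | ∃ H : G.Subgraph, H.verts.ncard = k ∧ H.Connected ∧ x = subDensity H}

noncomputable def maxDensity (G : SimpleGraph V) : ℝ :=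
  sSup {x : ℝ | ∃ H : G.Subgraph, H.verts.Nonempty ∧ x = subDensity H}

def cutCount (G : SimpleGraph V) [DecidableRel G.Adj] (S T : Finset V) : ℕ :=
  ((S ×ˢ T).filter fun p => G.Adj p.1 p.2).card

def IsCompOf (G : SimpleGraph V) (A W : Set V) : Prop :=
  A.Nonempty ∧ A ⊆ W ∧ (G.induce A).Connected ∧
    ∀ B : Set V, A ⊆ B → B ⊆ W → (G.induce B).Connected → B = A

noncomputable def subWDensity {G : SimpleGraph V} (w : Sym2 V → ℝ) (H : G.Subgraph) : ℝ :=
  2 * (∑ᶠ e ∈ H.edgeSet, w e) / H.verts.ncard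

noncomputable def indWDensity (G : SimpleGraph V) (w : Sym2 V → ℝ) (S : Finset V) : ℝ :=
  2 * (∑ᶠ e ∈ {e : Sym2 V | e ∈ G.edgeSet ∧ ∀ v ∈ e, v ∈ S}, w e) / S.card

noncomputable def maxKWDensity (G : SimpleGraph V) (w : Sym2 V → ℝ) (k : ℕ) : ℝ :=
  sSup {x : ℝ | ∃ H : G.Subgraph, H.verts.ncard = k ∧ x = subWDensity w H}

noncomputable def maxConnKWDensity (G : SimpleGraph V) (w : Sym2 V → ℝ) (k : ℕ) : ℝ :=
  sSup {x : ℝ | ∃ H : G.Subgraph, H.verts.ncard = k ∧ H.Connected ∧ x = subWDensity w H}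

section Aux
variable {V : Type*} [DecidableEq V]

/-- connectivity of a finite vertex set -/
def CP (G : SimpleGraph V) (S : Finset V) : Prop := (G.induce (S : Set V)).Connected

open scoped Classical in
noncomputable def wgtN [Fintype V] (G : SimpleGraph V) (w : Sym2 V → ℕ) (S : Finset V) : ℕ :=
  ∑ e ∈ Finset.univ.filter (fun e : Sym2 V => e ∈ G.edgeSet ∧ ∀ x ∈ e, x ∈ S), w e

lemma wgtN_mono [Fintype V] (G : SimpleGraph V) (w : Sym2 V → ℕ) {S T : Finset V} (h : S ⊆ T) :
    wgtN G w S ≤ wgtN G w T := by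
  classical
  apply Finset.sum_le_sum_of_subset
  intro e he
  simp only [Finset.mem_filter] at he ⊢
  exact ⟨he.1, he.2.1, fun x hx => h (he.2.2 x hx)⟩

lemma walk_support_CP (G : SimpleGraph V) {u v : V} (p : G.Walk u v) :
    CP G p.support.toFinset := by
  have h := p.connected_induce_support
  have heq : {x | x ∈ p.support} = (p.support.toFinset : Set V) := by
    ext x; simp
  rwa [CP, ← heq]

lemma CP_union_adj (G : SimpleGraph V) {S T : Finset V} {a b : V}
    (hS : CP G S) (hT : CP G T) (ha : a ∈ S) (hb : b ∈ T) (hab : G.Adj a b) :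
    CP G (S ∪ T) := by
  have := SimpleGraph.connected_induce_union (SimpleGraph.Connected.preconnected hS) (SimpleGraph.Connected.preconnected hT) (by exact ha) (by exact hb) hab
  rwa [CP, Finset.coe_union]

lemma CP_singleton (G : SimpleGraph V) (b : V) : CP G {b} := by
  rw [CP]
  have hne : Nonempty (↑(({b}:Finset V) : Set V)) := ⟨⟨b, by simp⟩⟩
  refine SimpleGraph.Connected.mk ?_
  rintro ⟨x, hx⟩ ⟨y, hy⟩
  simp only [Finset.coe_singleton, Set.mem_singleton_iff] at hx hy
  subst hx; subst hy
  exact SimpleGraph.Reachable.refl _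

lemma CP_insert_adj (G : SimpleGraph V) {S : Finset V} {a b : V}
    (hS : CP G S) (ha : a ∈ S) (hab : G.Adj a b) : CP G (insert b S) := by
  have := CP_union_adj G hS (CP_singleton G b) ha (Finset.mem_singleton_self b) hab
  rwa [Finset.union_comm, ← Finset.insert_eq] at this

omit [DecidableEq V] in
lemma CP_nonempty {G : SimpleGraph V} {S : Finset V} (h : CP G S) : S.Nonempty := by
  obtain ⟨⟨x, hx⟩⟩ := h.nonempty
  exact ⟨x, by exact_mod_cast hx⟩

set_option linter.unusedSectionVars false

variable {G : SimpleGraph V}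

lemma cross_of_walk {S : Finset V} {a b : V} (p : G.Walk a b) (ha : a ∈ S) (hb : b ∉ S) :
    ∃ x y, x ∈ S ∧ y ∉ S ∧ G.Adj x y := by
  induction p with
  | nil => exact absurd ha hb
  | @cons u c w h q ih =>
    by_cases hc : c ∈ S
    · exact ih hc hb
    · exact ⟨u, c, ha, hc, h⟩

lemma exists_cross (hG : G.Preconnected) {S : Finset V} (hne : S.Nonempty) {v : V}
    (hv : v ∉ S) : ∃ x y, x ∈ S ∧ y ∉ S ∧ G.Adj x y := by
  obtain ⟨a, ha⟩ := hne
  obtain ⟨p⟩ := hG a v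
  exact cross_of_walk p ha hv

lemma CP_extend [Fintype V] (hG : G.Connected) {S0 : Finset V} (h0 : CP G S0) {k : ℕ}
    (hc : S0.card ≤ k) (hk : k ≤ Fintype.card V) :
    ∃ S : Finset V, S0 ⊆ S ∧ S.card = k ∧ CP G S := by
  classical
  have key : ∀ d (T : Finset V), CP G T → T.card ≤ k → k - T.card ≤ d →
      ∃ S : Finset V, T ⊆ S ∧ S.card = k ∧ CP G S := by
    intro d
    induction d with
    | zero =>
      intro T hT hTk hd
      have : T.card = k := by omega
      exact ⟨T, subset_rfl, this, hT⟩
    | succ n ih =>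
      intro T hT hTk hd
      by_cases he : T.card = k
      · exact ⟨T, subset_rfl, he, hT⟩
      · have hlt : T.card < k := lt_of_le_of_ne hTk he
        have hex : ∃ v, v ∉ T := by
          by_contra hcon
          push_neg at hcon
          have : (univ : Finset V) ⊆ T := fun x _ => hcon x
          have := Finset.card_le_card this
          simp only [Finset.card_univ] at this
          omega
        obtain ⟨v, hv⟩ := hex
        obtain ⟨a, b, haT, hbT, hab⟩ := exists_cross hG.preconnected (CP_nonempty hT) hv
        have h1 : CP G (insert b T) := CP_insert_adj G hT haT hab
        have hcard : (insert b T).card = T.card + 1 := Finset.card_insert_of_notMem hbT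
        obtain ⟨S, hsub, hSk, hCP⟩ := ih (insert b T) h1 (by omega) (by omega)
        exact ⟨S, (Finset.subset_insert _ _).trans hsub, hSk, hCP⟩
  exact key (k - S0.card) S0 h0 hc le_rfl

lemma spanning_walk [Fintype V] (hG : G.Connected) :
    ∃ (u v : V) (p : G.Walk u v), (∀ x : V, x ∈ p.support) ∧
      p.length ≤ 2 * Fintype.card V := by
  classical
  have hne : Nonempty V := hG.nonempty
  obtain ⟨u0⟩ := hne
  have key : ∀ d {u v : V} (p : G.Walk u v), ((univ : Finset V) \ p.support.toFinset).card ≤ d →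
      ∃ (u' v' : V) (q : G.Walk u' v'), (∀ x : V, x ∈ q.support) ∧
        q.length ≤ p.length + 2 * d := by
    intro d
    induction d with
    | zero =>
      intro u v p hd
      refine ⟨u, v, p, fun x => ?_, by omega⟩
      have : ((univ : Finset V) \ p.support.toFinset) = ∅ := Finset.card_eq_zero.mp (by omega)
      have hx : x ∈ p.support.toFinset := by
        by_contra hcon
        have hmem : x ∈ (univ : Finset V) \ p.support.toFinset := by simp [hcon]
        rw [this] at hmem
        exact absurd hmem (Finset.notMem_empty x)
      simpa using hx
    | succ n ih =>
      intro u v p hd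
      by_cases hall : ∀ x : V, x ∈ p.support
      · exact ⟨u, v, p, hall, by omega⟩
      · push_neg at hall
        obtain ⟨z, hz⟩ := hall
        have hzT : z ∉ p.support.toFinset := by simpa using hz
        obtain ⟨a, b, haS, hbS, hab⟩ := exists_cross hG.preconnected
          ⟨u, by simp [SimpleGraph.Walk.start_mem_support]⟩ hzT
        have haS' : a ∈ p.support := by simpa using haS
        set q' : G.Walk u v :=
          (p.takeUntil a haS').append
            (SimpleGraph.Walk.cons hab (SimpleGraph.Walk.cons hab.symm (p.dropUntil a haS')))
          with hq'
        have hsupp : q'.support = (p.takeUntil a haS').support ++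
            (b :: (p.dropUntil a haS').support) := by
          rw [hq', SimpleGraph.Walk.support_append]
          simp [SimpleGraph.Walk.support_cons]
        have hold : ∀ x ∈ p.support, x ∈ q'.support := by
          intro x hx
          have := (p.take_spec haS') ▸ hx
          rw [← SimpleGraph.Walk.take_spec p haS', SimpleGraph.Walk.support_append] at hx
          rw [hsupp]
          rcases List.mem_append.mp hx with h1 | h2
          · exact List.mem_append.mpr (Or.inl h1)
          · exact List.mem_append.mpr (Or.inr (List.mem_cons_of_mem _ (List.mem_of_mem_tail h2)))
        have hbq : b ∈ q'.support := by
          rw [hsupp]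
          exact List.mem_append.mpr (Or.inr List.mem_cons_self)
        have hql : q'.length = p.length + 2 := by
          rw [hq', SimpleGraph.Walk.length_append]
          simp only [SimpleGraph.Walk.length_cons]
          have := SimpleGraph.Walk.length_append (p.takeUntil a haS') (p.dropUntil a haS')
          rw [SimpleGraph.Walk.take_spec p haS'] at this
          omega
        have hdec : ((univ : Finset V) \ q'.support.toFinset).card ≤ n := by
          have hss : (univ : Finset V) \ q'.support.toFinset ⊂
              (univ : Finset V) \ p.support.toFinset := by
            refine Finset.ssubset_iff_of_subset ?_ |>.mpr ?_
            · intro x hx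
              simp only [Finset.mem_sdiff, Finset.mem_univ, true_and, List.mem_toFinset] at hx ⊢
              exact fun hc => hx (hold x hc)
            · exact ⟨b, by simp [hbS], by simp [hbq]⟩
          have := Finset.card_lt_card hss
          omega
        obtain ⟨u', v', q'', hq''⟩ := ih q' hdec
        exact ⟨u', v', q'', hq''.1, by omega⟩
  obtain ⟨u, v, p, hsup, hlen⟩ := key (Fintype.card V) (SimpleGraph.Walk.nil' u0)
    (le_trans (Finset.card_le_card (Finset.sdiff_subset)) (by simp))
  exact ⟨u, v, p, hsup, by simpa using hlen⟩
variable {V : Type*} [DecidableEq V] {G : SimpleGraph V}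

def wsplit : ∀ {u v : V}, G.Walk u v → ℕ → Σ w : V, G.Walk u w × G.Walk w v
  | u, _, SimpleGraph.Walk.nil, _ => ⟨u, SimpleGraph.Walk.nil, SimpleGraph.Walk.nil⟩
  | u, _, SimpleGraph.Walk.cons h q, 0 => ⟨u, SimpleGraph.Walk.nil, SimpleGraph.Walk.cons h q⟩
  | _, _, SimpleGraph.Walk.cons h q, n + 1 =>
    let r := wsplit q n
    ⟨r.1, SimpleGraph.Walk.cons h r.2.1, r.2.2⟩

lemma wsplit_take_length : ∀ {u v : V} (p : G.Walk u v) (n : ℕ),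
    (wsplit p n).2.1.length ≤ n
  | _, _, SimpleGraph.Walk.nil, _ => by simp [wsplit]
  | _, _, SimpleGraph.Walk.cons h q, 0 => by simp [wsplit]
  | _, _, SimpleGraph.Walk.cons h q, n + 1 => by
    simp only [wsplit, SimpleGraph.Walk.length_cons]
    have := wsplit_take_length q n
    omega

lemma wsplit_drop_length : ∀ {u v : V} (p : G.Walk u v) (n : ℕ),
    (wsplit p n).2.2.length = p.length - n
  | _, _, SimpleGraph.Walk.nil, _ => by simp [wsplit]
  | _, _, SimpleGraph.Walk.cons h q, 0 => by simp [wsplit]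
  | _, _, SimpleGraph.Walk.cons h q, n + 1 => by
    simp only [wsplit, SimpleGraph.Walk.length_cons]
    have := wsplit_drop_length q n
    omega

lemma wsplit_support : ∀ {u v : V} (p : G.Walk u v) (n : ℕ), ∀ x ∈ p.support,
    x ∈ (wsplit p n).2.1.support ∨ x ∈ (wsplit p n).2.2.support
  | _, _, SimpleGraph.Walk.nil, _ => by simp [wsplit]
  | _, _, SimpleGraph.Walk.cons h q, 0 => by simp [wsplit]
  | _, _, SimpleGraph.Walk.cons h q, n + 1 => by
    intro x hx
    simp only [SimpleGraph.Walk.support_cons, List.mem_cons] at hx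
    rcases hx with rfl | hx
    · left; simp [wsplit]
    · rcases wsplit_support q n x hx with h1 | h1
      · left; simp only [wsplit, SimpleGraph.Walk.support_cons, List.mem_cons]
        right; exact h1
      · right; simpa [wsplit] using h1

lemma chunk_lemma (h : ℕ) (hh : 1 ≤ h) {u v : V} (p : G.Walk u v) :
    ∃ Bs : List (Finset V), (∀ B ∈ Bs, B.card ≤ h + 1 ∧ CP G B) ∧
      (∀ x ∈ p.support, ∃ B ∈ Bs, x ∈ B) ∧ Bs.length * h ≤ p.length + h := by
  have key : ∀ L : ℕ, ∀ {u v : V} (p : G.Walk u v), p.length ≤ L →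
      ∃ Bs : List (Finset V), (∀ B ∈ Bs, B.card ≤ h + 1 ∧ CP G B) ∧
        (∀ x ∈ p.support, ∃ B ∈ Bs, x ∈ B) ∧ Bs.length * h ≤ p.length + h := by
    intro L
    induction L with
    | zero =>
      intro u v p hL
      refine ⟨[p.support.toFinset], ?_, ?_, ?_⟩
      · intro B hB
        simp only [List.mem_singleton] at hB
        subst hB
        constructor
        · calc p.support.toFinset.card ≤ p.support.length := List.toFinset_card_le _
            _ = p.length + 1 := SimpleGraph.Walk.length_support p
            _ ≤ h + 1 := by omega
        · exact walk_support_CP G p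
      · intro x hx
        exact ⟨p.support.toFinset, List.mem_singleton_self _, by simpa using hx⟩
      · simpa using by omega
    | succ n ih =>
      intro u v p hL
      by_cases hsmall : p.length ≤ h
      · refine ⟨[p.support.toFinset], ?_, ?_, ?_⟩
        · intro B hB
          simp only [List.mem_singleton] at hB
          subst hB
          refine ⟨?_, walk_support_CP G p⟩
          calc p.support.toFinset.card ≤ p.support.length := List.toFinset_card_le _
            _ = p.length + 1 := SimpleGraph.Walk.length_support p
            _ ≤ h + 1 := by omega
        · intro x hx
          exact ⟨p.support.toFinset, List.mem_singleton_self _, by simpa using hx⟩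
        · simpa using by omega
      · push_neg at hsmall
        set r := wsplit p h with hr
        have hdl : r.2.2.length = p.length - h := wsplit_drop_length p h
        have htl : r.2.1.length ≤ h := wsplit_take_length p h
        obtain ⟨Bs, hB1, hB2, hB3⟩ := ih r.2.2 (by omega)
        refine ⟨r.2.1.support.toFinset :: Bs, ?_, ?_, ?_⟩
        · intro B hB
          rcases List.mem_cons.mp hB with rfl | hB
          · refine ⟨?_, walk_support_CP G _⟩
            calc r.2.1.support.toFinset.card ≤ r.2.1.support.length := List.toFinset_card_le _
              _ = r.2.1.length + 1 := SimpleGraph.Walk.length_support _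
              _ ≤ h + 1 := by omega
          · exact hB1 B hB
        · intro x hx
          rcases wsplit_support p h x hx with h1 | h1
          · exact ⟨r.2.1.support.toFinset, List.mem_cons_self, by simpa using h1⟩
          · obtain ⟨B, hBm, hxB⟩ := hB2 x h1
            exact ⟨B, List.mem_cons_of_mem _ hBm, hxB⟩
        · simp only [List.length_cons]
          have : (Bs.length + 1) * h = Bs.length * h + h := by ring
          omega
  exact key p.length p le_rfl


section Fin
variable [Fintype V]

open scoped Classical in
lemma select_pair (w : Sym2 V → ℕ) {Bs : List (Finset V)} [Nonempty V]
    (hcov : ∀ x : V, ∃ B ∈ Bs, x ∈ B) :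
    ∃ B C : Finset V, B ∈ Bs ∧ C ∈ Bs ∧
      wgtN G w Finset.univ ≤ Bs.toFinset.card ^ 2 * wgtN G w (B ∪ C) := by
  set P := Bs.toFinset with hP
  have hPne : P.Nonempty := by
    obtain ⟨x⟩ := ‹Nonempty V›
    obtain ⟨B, hB, _⟩ := hcov x
    exact ⟨B, List.mem_toFinset.mpr hB⟩
  set Efin := Finset.univ.filter
    (fun e : Sym2 V => e ∈ G.edgeSet ∧ ∀ x ∈ e, x ∈ (Finset.univ : Finset V)) with hE
  have hHe : ∀ e ∈ Efin, ∃ pr : Finset V × Finset V,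
      pr ∈ P ×ˢ P ∧ ∀ x ∈ e, x ∈ pr.1 ∪ pr.2 := by
    intro e heE
    induction e using Sym2.ind with
    | _ a b =>
      obtain ⟨Ba, hBa, haB⟩ := hcov a
      obtain ⟨Bb, hBb, hbB⟩ := hcov b
      refine ⟨(Ba, Bb), Finset.mem_product.mpr
        ⟨List.mem_toFinset.mpr hBa, List.mem_toFinset.mpr hBb⟩, ?_⟩
      intro x hx
      rcases Sym2.mem_iff.mp hx with rfl | rfl
      · exact Finset.mem_union_left _ haB
      · exact Finset.mem_union_right _ hbB
  set cl : Sym2 V → Finset V × Finset V := fun e =>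
    if he : ∃ pr : Finset V × Finset V, pr ∈ P ×ˢ P ∧ ∀ x ∈ e, x ∈ pr.1 ∪ pr.2
    then he.choose else (∅, ∅) with hcl
  have hclspec : ∀ e ∈ Efin, cl e ∈ P ×ˢ P ∧ ∀ x ∈ e, x ∈ (cl e).1 ∪ (cl e).2 := by
    intro e heE
    have he := hHe e heE
    simp only [hcl, dif_pos he]
    exact he.choose_spec
  -- fiberwise sum
  have hfib : ∑ pr ∈ P ×ˢ P, ∑ e ∈ Efin.filter (fun e => cl e = pr), w e
      = ∑ e ∈ Efin, w e :=
    Finset.sum_fiberwise_of_maps_to (fun e he => (hclspec e he).1) _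
  -- each fiber bounded
  have hfible : ∀ pr ∈ P ×ˢ P,
      ∑ e ∈ Efin.filter (fun e => cl e = pr), w e ≤ wgtN G w (pr.1 ∪ pr.2) := by
    intro pr hpr
    apply Finset.sum_le_sum_of_subset
    intro e he
    obtain ⟨heE, he2⟩ := Finset.mem_filter.mp he
    have he1 : e ∈ G.edgeSet := (Finset.mem_filter.mp heE).2.1
    simp only [wgtN, Finset.mem_filter, Finset.mem_univ, true_and]
    refine ⟨he1, fun x hx => ?_⟩
    have := (hclspec e heE).2 x hx
    rwa [he2] at this
  obtain ⟨pr₀, hpr₀, hmax⟩ := Finset.exists_max_image (P ×ˢ P)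
    (fun pr : Finset V × Finset V => wgtN G w (pr.1 ∪ pr.2)) (hPne.product hPne)
  refine ⟨pr₀.1, pr₀.2, List.mem_toFinset.mp (Finset.mem_product.mp hpr₀).1,
    List.mem_toFinset.mp (Finset.mem_product.mp hpr₀).2, ?_⟩
  have h1 : wgtN G w Finset.univ = ∑ e ∈ Efin, w e := rfl
  calc wgtN G w Finset.univ = ∑ pr ∈ P ×ˢ P, ∑ e ∈ Efin.filter (fun e => cl e = pr), w e := by
        rw [hfib, h1]
    _ ≤ ∑ pr ∈ P ×ˢ P, wgtN G w (pr.1 ∪ pr.2) := Finset.sum_le_sum hfible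
    _ ≤ (P ×ˢ P).card • wgtN G w (pr₀.1 ∪ pr₀.2) :=
        Finset.sum_le_card_nsmul _ _ _ (fun pr hpr => hmax pr hpr)
    _ = P.card ^ 2 * wgtN G w (pr₀.1 ∪ pr₀.2) := by
        rw [Finset.card_product, smul_eq_mul]; ring

open scoped Classical in
lemma no_cross_split (w : Sym2 V → ℕ) {B C : Finset V}
    (hnc : ∀ a ∈ B, ∀ b ∈ C, G.Adj a b → w (s(a, b)) = 0) :
    wgtN G w (B ∪ C) ≤ wgtN G w B + wgtN G w C := by
  classical
  rw [wgtN]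
  rw [← Finset.sum_filter_add_sum_filter_not _ (fun e : Sym2 V => ∀ x ∈ e, x ∈ B)]
  gcongr ?_ + ?_
  · apply Finset.sum_le_sum_of_subset
    intro e he
    obtain ⟨he1, he2⟩ := Finset.mem_filter.mp he
    obtain ⟨-, he3, -⟩ := Finset.mem_filter.mp he1
    simp only [wgtN, Finset.mem_filter, Finset.mem_univ, true_and]
    exact ⟨he3, he2⟩
  · rw [← Finset.sum_filter_add_sum_filter_not
      (Finset.filter _ (Finset.filter _ Finset.univ)) (fun e : Sym2 V => ∀ x ∈ e, x ∈ C)]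
    have hz : ∑ e ∈ ((Finset.univ.filter
        (fun e : Sym2 V => e ∈ G.edgeSet ∧ ∀ x ∈ e, x ∈ B ∪ C)).filter
        (fun e => ¬ ∀ x ∈ e, x ∈ B)).filter (fun e => ¬ ∀ x ∈ e, x ∈ C), w e = 0 := by
      apply Finset.sum_eq_zero
      intro e he
      obtain ⟨he1, hnC⟩ := Finset.mem_filter.mp he
      obtain ⟨he2, hnB⟩ := Finset.mem_filter.mp he1
      obtain ⟨-, heE, hBC⟩ := Finset.mem_filter.mp he2
      induction e using Sym2.ind with
      | _ a b =>
        have hadj : G.Adj a b := heE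
        have ha : a ∈ B ∪ C := hBC a (Sym2.mem_mk_left a b)
        have hb : b ∈ B ∪ C := hBC b (Sym2.mem_mk_right a b)
        push_neg at hnB hnC
        obtain ⟨xB, hxBm, hxB⟩ := hnB
        obtain ⟨xC, hxCm, hxC⟩ := hnC
        -- in each case find crossing orientation
        rcases Finset.mem_union.mp ha with haB | haC
        · -- a ∈ B; then b ∉ B would give b ∈ C, crossing a-b
          rcases Finset.mem_union.mp hb with hbB | hbC
          · -- both in B contradicts hnB
            exfalso
            rcases Sym2.mem_iff.mp hxBm with rfl | rfl
            · exact hxB haB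
            · exact hxB hbB
          · exact hnc a haB b hbC hadj
        · rcases Finset.mem_union.mp hb with hbB | hbC
          · have := hnc b hbB a haC hadj.symm
            rwa [Sym2.eq_swap] at this
          · exfalso
            rcases Sym2.mem_iff.mp hxCm with rfl | rfl
            · exact hxC haC
            · exact hxC hbC
    rw [hz, add_zero]
    apply Finset.sum_le_sum_of_subset
    intro e he
    obtain ⟨he1, he2⟩ := Finset.mem_filter.mp he
    obtain ⟨he3, -⟩ := Finset.mem_filter.mp he1
    obtain ⟨-, heE, -⟩ := Finset.mem_filter.mp he3
    simp only [wgtN, Finset.mem_filter, Finset.mem_univ, true_and]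
    exact ⟨heE, he2⟩

end Fin

section Fin2
variable [Fintype V]

open scoped Classical in
lemma branch2 (hG : G.Connected) (w : Sym2 V → ℕ) {k : ℕ}
    (hk8 : 8 ≤ k) (hkn : k ≤ Fintype.card V) :
    ∃ S : Finset V, S.card = k ∧ CP G S ∧
      (wgtN G w Finset.univ : ℝ) ≤
        578 * ((Fintype.card V : ℝ) ^ 2 / (k : ℝ) ^ 2) * (wgtN G w S : ℝ) := by
  classical
  have hne : Nonempty V := hG.nonempty
  set n := Fintype.card V with hn
  set h := k / 4 with hh
  have hdiv := Nat.div_add_mod k 4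
  have hmod : k % 4 < 4 := Nat.mod_lt _ (by norm_num)
  have hh1 : 1 ≤ h := by omega
  obtain ⟨u, v, p, hsup, hlen⟩ := spanning_walk hG
  obtain ⟨Bs, hB1, hB2, hB3⟩ := chunk_lemma h hh1 p
  have hcov : ∀ x : V, ∃ B ∈ Bs, x ∈ B := fun x => hB2 x (hsup x)
  obtain ⟨B, C, hBm, hCm, hsel⟩ := select_pair w hcov
  obtain ⟨hBcard, hBCP⟩ := hB1 B hBm
  obtain ⟨hCcard, hCCP⟩ := hB1 C hCm
  set P := Bs.toFinset.card with hPdef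
  have hkey : ∃ S₀ : Finset V, CP G S₀ ∧ S₀.card ≤ k ∧
      wgtN G w Finset.univ ≤ 2 * P ^ 2 * wgtN G w S₀ := by
    by_cases hc : ∃ a ∈ B, ∃ b ∈ C, G.Adj a b ∧ w (s(a, b)) ≠ 0
    · obtain ⟨a, haB, b, hbC, hadj, -⟩ := hc
      refine ⟨B ∪ C, CP_union_adj G hBCP hCCP haB hbC hadj, ?_, ?_⟩
      · have := Finset.card_union_le B C
        omega
      · calc wgtN G w Finset.univ ≤ P ^ 2 * wgtN G w (B ∪ C) := hsel
          _ ≤ 2 * P ^ 2 * wgtN G w (B ∪ C) := by nlinarith [wgtN G w (B ∪ C)]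
    · push_neg at hc
      have hnc : ∀ a ∈ B, ∀ b ∈ C, G.Adj a b → w (s(a, b)) = 0 := hc
      have hsplit := no_cross_split (G := G) w hnc
      by_cases hBC : wgtN G w C ≤ wgtN G w B
      · refine ⟨B, hBCP, by omega, ?_⟩
        calc wgtN G w Finset.univ ≤ P ^ 2 * wgtN G w (B ∪ C) := hsel
          _ ≤ P ^ 2 * (wgtN G w B + wgtN G w C) := by
              exact Nat.mul_le_mul_left _ hsplit
          _ ≤ 2 * P ^ 2 * wgtN G w B := by nlinarith
      · refine ⟨C, hCCP, by omega, ?_⟩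
        calc wgtN G w Finset.univ ≤ P ^ 2 * wgtN G w (B ∪ C) := hsel
          _ ≤ P ^ 2 * (wgtN G w B + wgtN G w C) := by
              exact Nat.mul_le_mul_left _ hsplit
          _ ≤ 2 * P ^ 2 * wgtN G w C := by nlinarith
  obtain ⟨S₀, hS₀CP, hS₀card, hS₀w⟩ := hkey
  obtain ⟨S, hsub, hScard, hSCP⟩ := CP_extend hG hS₀CP hS₀card hkn
  have hwS : wgtN G w S₀ ≤ wgtN G w S := wgtN_mono G w hsub
  refine ⟨S, hScard, hSCP, ?_⟩
  -- numeric part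
  have hPh : P * h ≤ 2 * n + h := by
    have h1 : P ≤ Bs.length := List.toFinset_card_le _
    have h2 : Bs.length * h ≤ p.length + h := hB3
    have : P * h ≤ Bs.length * h := Nat.mul_le_mul_right _ h1
    omega
  have hk8' : k ≤ 8 * h := by omega
  have hkpos : (0:ℝ) < (k:ℝ) := by positivity
  have hhpos : (0:ℝ) < (h:ℝ) := by exact_mod_cast hh1
  have hnk : (k:ℝ) ≤ (n:ℝ) := by exact_mod_cast hkn
  have hPr : (P:ℝ) ≤ 17 * (n:ℝ) / (k:ℝ) := by
    rw [le_div_iff₀ hkpos]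
    have h1 : (P:ℝ) * (h:ℝ) ≤ 2 * (n:ℝ) + (h:ℝ) := by exact_mod_cast hPh
    have h2 : (k:ℝ) ≤ 8 * (h:ℝ) := by exact_mod_cast hk8'
    have h4 : (P:ℝ) * (h:ℝ) * (k:ℝ) ≤ (2 * (n:ℝ) + (h:ℝ)) * (k:ℝ) :=
      mul_le_mul_of_nonneg_right h1 (le_of_lt hkpos)
    have h5 : 2 * (n:ℝ) * (k:ℝ) ≤ 2 * (n:ℝ) * (8 * (h:ℝ)) :=
      mul_le_mul_of_nonneg_left h2 (by positivity)
    have h6 : (k:ℝ) * (h:ℝ) ≤ (n:ℝ) * (h:ℝ) :=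
      mul_le_mul_of_nonneg_right hnk (le_of_lt hhpos)
    have h7 : (P:ℝ) * (k:ℝ) * (h:ℝ) ≤ (17 * (n:ℝ)) * (h:ℝ) := by nlinarith
    exact le_of_mul_le_mul_right h7 hhpos
  have hW : (wgtN G w Finset.univ : ℝ) ≤ 2 * (P:ℝ) ^ 2 * (wgtN G w S : ℝ) := by
    exact_mod_cast le_trans hS₀w (Nat.mul_le_mul_left _ hwS)
  have hP2 : 2 * (P:ℝ) ^ 2 ≤ 578 * ((n:ℝ) ^ 2 / (k:ℝ) ^ 2) := by
    have hPnn : (0:ℝ) ≤ (P:ℝ) := Nat.cast_nonneg _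
    have hsq : (P:ℝ) ^ 2 ≤ (17 * (n:ℝ) / (k:ℝ)) ^ 2 := by
      apply pow_le_pow_left₀ hPnn hPr
    have heq : (17 * (n:ℝ) / (k:ℝ)) ^ 2 = 289 * ((n:ℝ) ^ 2 / (k:ℝ) ^ 2) := by
      field_simp
      ring
    rw [heq] at hsq
    linarith
  calc (wgtN G w Finset.univ : ℝ) ≤ 2 * (P:ℝ) ^ 2 * (wgtN G w S : ℝ) := hW
    _ ≤ 578 * ((n:ℝ) ^ 2 / (k:ℝ) ^ 2) * (wgtN G w S : ℝ) :=
        mul_le_mul_of_nonneg_right hP2 (Nat.cast_nonneg _)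
end Fin2

lemma sum_image_le_nat {α β : Type*} [DecidableEq β] (s : Finset α) (g : α → β) (f : β → ℕ) :
    ∑ b ∈ s.image g, f b ≤ ∑ a ∈ s, f (g a) := by
  classical
  induction s using Finset.induction_on with
  | empty => simp
  | @insert a s ha ih =>
    rw [Finset.image_insert, Finset.sum_insert ha]
    by_cases hg : g a ∈ s.image g
    · rw [Finset.insert_eq_self.mpr hg]
      omega
    · rw [Finset.sum_insert hg]
      omega

section Fin3
variable [Fintype V]

open scoped Classical in
noncomputable def starN (G : SimpleGraph V) (w : Sym2 V → ℕ) (v : V) (A : Finset V) : ℕ :=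
  ∑ u ∈ A.filter (fun u => G.Adj v u), w (s(v, u))

open scoped Classical in
lemma double_count (w : Sym2 V → ℕ) (A : Finset V) :
    wgtN G w A ≤ ∑ v ∈ A, starN G w v A := by
  classical
  set T := (A ×ˢ A).filter (fun q : V × V => G.Adj q.1 q.2) with hT
  have hRHS : ∑ v ∈ A, starN G w v A = ∑ q ∈ T, w (s(q.1, q.2)) := by
    rw [hT, Finset.sum_filter, Finset.sum_product]
    apply Finset.sum_congr rfl
    intro v hv
    rw [starN, Finset.sum_filter]
  rw [hRHS]
  have hsub : Finset.univ.filter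
      (fun e : Sym2 V => e ∈ G.edgeSet ∧ ∀ x ∈ e, x ∈ A) ⊆ T.image (fun q => s(q.1, q.2)) := by
    intro e he
    obtain ⟨-, heE, hin⟩ := Finset.mem_filter.mp he
    induction e using Sym2.ind with
    | _ a b =>
      refine Finset.mem_image.mpr ⟨(a, b), ?_, rfl⟩
      rw [hT, Finset.mem_filter, Finset.mem_product]
      exact ⟨⟨hin a (Sym2.mem_mk_left a b), hin b (Sym2.mem_mk_right a b)⟩, heE⟩
  calc wgtN G w A ≤ ∑ e ∈ T.image (fun q => s(q.1, q.2)), w e :=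
        Finset.sum_le_sum_of_subset hsub
    _ ≤ ∑ q ∈ T, w (s(q.1, q.2)) := sum_image_le_nat _ _ _

open scoped Classical in
lemma CP_star {v : V} (N : Finset V) (hN : ∀ u ∈ N, G.Adj v u) : CP G (insert v N) := by
  classical
  induction N using Finset.induction_on with
  | empty => simpa using CP_singleton G v
  | @insert u N hu ih =>
    have hvu : G.Adj v u := hN u (Finset.mem_insert_self u N)
    have hCP : CP G (insert v N) := ih (fun x hx => hN x (Finset.mem_insert_of_mem hx))
    have := CP_insert_adj G hCP (Finset.mem_insert_self v N) hvu
    rwa [Finset.insert_comm] at this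

open scoped Classical in
lemma branch1 (hG : G.Connected) (w : Sym2 V → ℕ) {k : ℕ}
    (hk : 1 ≤ k) (hkn : k ≤ Fintype.card V) :
    ∃ S : Finset V, S.card = k ∧ CP G S ∧
      ∀ A : Finset V, A.card = k → wgtN G w A ≤ k * wgtN G w S := by
  classical
  have hku : k ≤ (Finset.univ : Finset V).card := by simpa using hkn
  obtain ⟨A₀, -, hA₀card⟩ := Finset.exists_subset_card_eq hku
  have hPne : ((Finset.univ : Finset V).powersetCard k).Nonempty :=
    ⟨A₀, Finset.mem_powersetCard.mpr ⟨Finset.subset_univ _, hA₀card⟩⟩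
  obtain ⟨Astar, hAstarMem, hAmax⟩ := Finset.exists_max_image _ (wgtN G w) hPne
  obtain ⟨-, hAcard⟩ := Finset.mem_powersetCard.mp hAstarMem
  have hAne : Astar.Nonempty := Finset.card_pos.mp (by omega)
  obtain ⟨vs, hvsA, hvmax⟩ := Finset.exists_max_image Astar (fun v => starN G w v Astar) hAne
  set S₀ := insert vs (Astar.filter (fun u => G.Adj vs u)) with hS₀
  have hS₀sub : S₀ ⊆ Astar := by
    rw [hS₀]
    intro x hx
    rcases Finset.mem_insert.mp hx with rfl | hx
    · exact hvsA
    · exact (Finset.mem_filter.mp hx).1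
  have hS₀CP : CP G S₀ := CP_star _ (fun u hu => (Finset.mem_filter.mp hu).2)
  have hS₀card : S₀.card ≤ k := hAcard ▸ Finset.card_le_card hS₀sub
  have hstar_le : starN G w vs Astar ≤ wgtN G w S₀ := by
    rw [starN, wgtN]
    have himg : ∑ u ∈ Astar.filter (fun u => G.Adj vs u), w (s(vs, u)) =
        ∑ e ∈ (Astar.filter (fun u => G.Adj vs u)).image (fun u => s(vs, u)), w e := by
      rw [Finset.sum_image]
      intro x hx y hy hxy
      have := Sym2.eq_iff.mp hxy
      rcases this with ⟨-, h2⟩ | ⟨h1, h2⟩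
      · exact h2
      · rw [← h1, h2]
    rw [himg]
    apply Finset.sum_le_sum_of_subset
    intro e he
    obtain ⟨u, hu, rfl⟩ := Finset.mem_image.mp he
    obtain ⟨huA, hadj⟩ := Finset.mem_filter.mp hu
    simp only [Finset.mem_filter, Finset.mem_univ, true_and]
    refine ⟨hadj, ?_⟩
    intro x hx
    rcases Sym2.mem_iff.mp hx with rfl | rfl
    · exact Finset.mem_insert_self _ _
    · exact Finset.mem_insert_of_mem hu
  obtain ⟨S, hsub, hScard, hSCP⟩ := CP_extend hG hS₀CP hS₀card hkn
  refine ⟨S, hScard, hSCP, ?_⟩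
  intro A hA
  have h1 : wgtN G w A ≤ wgtN G w Astar :=
    hAmax A (Finset.mem_powersetCard.mpr ⟨Finset.subset_univ _, hA⟩)
  have h2 : wgtN G w Astar ≤ ∑ v ∈ Astar, starN G w v Astar := double_count w Astar
  have h3 : ∑ v ∈ Astar, starN G w v Astar ≤ Astar.card • starN G w vs Astar :=
    Finset.sum_le_card_nsmul _ _ _ (fun x hx => hvmax x hx)
  have h4 : wgtN G w S₀ ≤ wgtN G w S := wgtN_mono G w hsub
  calc wgtN G w A ≤ wgtN G w Astar := h1
    _ ≤ Astar.card • starN G w vs Astar := le_trans h2 h3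
    _ = k * starN G w vs Astar := by rw [hAcard, smul_eq_mul]
    _ ≤ k * wgtN G w S := Nat.mul_le_mul_left _ (le_trans hstar_le h4)
end Fin3


lemma min_le_pow23 {n k : ℕ} (hk : 1 ≤ k) (hn : 1 ≤ n) :
    min ((k:ℝ)) ((n:ℝ)^2/(k:ℝ)^2) ≤ (n:ℝ) ^ ((2:ℝ)/3) := by
  have hk0 : (0:ℝ) < (k:ℝ) := by positivity
  have hn0 : (0:ℝ) < (n:ℝ) := by exact_mod_cast hn
  set β := (n:ℝ) ^ ((2:ℝ)/3) with hβ
  have hβ0 : 0 ≤ β := Real.rpow_nonneg (Nat.cast_nonneg n) _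
  have hb3 : β ^ (3:ℕ) = (n:ℝ) ^ (2:ℕ) := by
    rw [hβ, ← Real.rpow_natCast ((n:ℝ) ^ ((2:ℝ)/3)) 3, ← Real.rpow_mul (Nat.cast_nonneg n),
      ← Real.rpow_natCast (n:ℝ) 2]
    norm_num
  by_cases hc : (k:ℝ)^3 ≤ (n:ℝ)^2
  · refine le_trans (min_le_left _ _) ?_
    by_contra hlt
    push_neg at hlt
    have := pow_lt_pow_left₀ hlt hβ0 (by norm_num : (3:ℕ) ≠ 0)
    rw [hb3] at this
    nlinarith
  · push_neg at hc
    refine le_trans (min_le_right _ _) ?_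
    by_contra hlt
    push_neg at hlt
    have h1 := pow_lt_pow_left₀ hlt hβ0 (by norm_num : (3:ℕ) ≠ 0)
    rw [hb3] at h1
    have h2 : ((n:ℝ)^2/(k:ℝ)^2)^(3:ℕ) = (n:ℝ)^6 / (k:ℝ)^6 := by
      rw [div_pow]
      norm_num [← pow_mul]
    rw [h2] at h1
    rw [lt_div_iff₀ (by positivity)] at h1
    -- h1 : n^2 * k^6 < n^6 ; hc : n^2 < k^3
    nlinarith [sq_nonneg ((n:ℝ)^2), sq_nonneg ((k:ℝ)^3), mul_pos hn0 hn0,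
      mul_lt_mul_of_pos_left hc (mul_pos hn0 hn0),
      mul_le_mul_of_nonneg_left (le_of_lt hc) (le_of_lt (mul_pos (mul_pos hn0 hn0) hn0))]


section Main
variable [Fintype V]

lemma main_comb (hG : G.Connected) (w : Sym2 V → ℕ) {k : ℕ}
    (h3 : 3 ≤ k) (hkn : k ≤ Fintype.card V) :
    ∃ S : Finset V, S.card = k ∧ CP G S ∧ ∀ A : Finset V, A.card = k →
      (wgtN G w A : ℝ) ≤
        1000000 * min ((k:ℝ)) ((Fintype.card V : ℝ)^2/(k:ℝ)^2) * (wgtN G w S : ℝ) := by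
  classical
  set n := Fintype.card V with hn
  have hk0 : (0:ℝ) < (k:ℝ) := by positivity
  have hn3 : 3 ≤ n := le_trans h3 hkn
  have hn0 : (0:ℝ) < (n:ℝ) := by
    have : (0:ℕ) < n := by omega
    exact_mod_cast this
  by_cases hcase : k^3 ≤ 1000000 * n^2
  · obtain ⟨S, hScard, hSCP, hbound⟩ := branch1 hG w (by omega) hkn
    refine ⟨S, hScard, hSCP, ?_⟩
    intro A hA
    have h1 : (wgtN G w A : ℝ) ≤ (k:ℝ) * (wgtN G w S : ℝ) := by
      exact_mod_cast hbound A hA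
    have h2 : (k:ℝ) ≤ 1000000 * min ((k:ℝ)) ((n:ℝ)^2/(k:ℝ)^2) := by
      rw [mul_min_of_nonneg _ _ (by norm_num : (0:ℝ) ≤ 1000000)]
      refine le_min (by nlinarith) ?_
      rw [← mul_div_assoc, le_div_iff₀ (by positivity)]
      have hc : (k:ℝ)^3 ≤ 1000000 * (n:ℝ)^2 := by exact_mod_cast hcase
      nlinarith
    calc (wgtN G w A : ℝ) ≤ (k:ℝ) * (wgtN G w S : ℝ) := h1
      _ ≤ 1000000 * min ((k:ℝ)) ((n:ℝ)^2/(k:ℝ)^2) * (wgtN G w S : ℝ) :=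
          mul_le_mul_of_nonneg_right h2 (Nat.cast_nonneg _)
  · push_neg at hcase
    have hk8 : 8 ≤ k := by
      have hkk : k^2 ≤ n^2 := Nat.pow_le_pow_left hkn 2
      have h1 : 1000000 * k^2 < k^3 := lt_of_le_of_lt (by nlinarith) hcase
      have h2 : 1000000 * k^2 < k * k^2 := by
        calc 1000000 * k^2 < k^3 := h1
          _ = k * k^2 := by ring
      have := Nat.lt_of_mul_lt_mul_right h2
      omega
    obtain ⟨S, hScard, hSCP, hbound⟩ := branch2 hG w hk8 hkn
    refine ⟨S, hScard, hSCP, ?_⟩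
    intro A hA
    have h1 : wgtN G w A ≤ wgtN G w Finset.univ := wgtN_mono G w (Finset.subset_univ _)
    have hminr : min ((k:ℝ)) ((n:ℝ)^2/(k:ℝ)^2) = (n:ℝ)^2/(k:ℝ)^2 := by
      apply min_eq_right
      rw [div_le_iff₀ (by positivity)]
      have hc : (n:ℝ)^2 < (k:ℝ)^3 / 1000000 := by
        rw [lt_div_iff₀ (by norm_num)]
        have : (1000000:ℝ) * (n:ℝ)^2 < (k:ℝ)^3 := by exact_mod_cast hcase
        linarith
      nlinarith
    rw [hminr]
    calc (wgtN G w A : ℝ) ≤ (wgtN G w Finset.univ : ℝ) := by exact_mod_cast h1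
      _ ≤ 578 * ((n:ℝ)^2/(k:ℝ)^2) * (wgtN G w S : ℝ) := hbound
      _ ≤ 1000000 * ((n:ℝ)^2/(k:ℝ)^2) * (wgtN G w S : ℝ) := by
          apply mul_le_mul_of_nonneg_right _ (Nat.cast_nonneg _)
          have : (0:ℝ) ≤ (n:ℝ)^2/(k:ℝ)^2 := by positivity
          nlinarith
end Main


/-- an `O(min{n^{2/3}, n²/k², k})`-approximation for the heaviest
connected `k`-subgraph problem with nonnegative integer weights. -/
theorem stmt17 : ∃ c : ℝ, c > 0 ∧
    ∀ (V : Type) [Fintype V] (G : SimpleGraph V), G.Connected →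
      ∀ w : Sym2 V → ℕ, ∀ k : ℕ, 3 ≤ k → k ≤ Fintype.card V →
        ∃ S : Finset V, S.card = k ∧ (G.induce (S : Set V)).Connected ∧
          maxKWDensity G (fun e => (w e : ℝ)) k ≤
            c * min ((Fintype.card V : ℝ) ^ ((2 : ℝ) / 3))
                (min ((Fintype.card V : ℝ) ^ 2 / (k : ℝ) ^ 2) (k : ℝ)) *
              indWDensity G (fun e => (w e : ℝ)) S := by
  classical
  refine ⟨1000000, by norm_num, ?_⟩
  intro V _ G hG w k hk3 hkn
  classical
  obtain ⟨S, hScard, hSCP, hbound⟩ := main_comb hG w hk3 hkn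
  refine ⟨S, hScard, hSCP, ?_⟩
  set n := Fintype.card V with hn
  have hk0 : (0:ℝ) < (k:ℝ) := by positivity
  have hn3 : 3 ≤ n := le_trans hk3 hkn
  -- indWDensity in terms of wgtN
  have hind : indWDensity G (fun e => (w e : ℝ)) S = 2 * (wgtN G w S : ℝ) / (k:ℝ) := by
    rw [indWDensity, hScard]
    congr 2
    have hset : {e : Sym2 V | e ∈ G.edgeSet ∧ ∀ v ∈ e, v ∈ S} =
        ↑(Finset.univ.filter (fun e : Sym2 V => e ∈ G.edgeSet ∧ ∀ x ∈ e, x ∈ S)) := by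
      ext e
      simp
    rw [hset, finsum_mem_coe_finset, wgtN]
    push_cast
    rfl
  have hindnn : 0 ≤ indWDensity G (fun e => (w e : ℝ)) S := by
    rw [hind]
    positivity
  have hminnn : 0 ≤ min ((n : ℝ) ^ ((2 : ℝ) / 3))
      (min ((n : ℝ) ^ 2 / (k : ℝ) ^ 2) (k : ℝ)) := by
    refine le_min (Real.rpow_nonneg (Nat.cast_nonneg n) _) (le_min (by positivity) (by positivity))
  have hminle : min ((k:ℝ)) ((n:ℝ)^2/(k:ℝ)^2) ≤
      min ((n : ℝ) ^ ((2 : ℝ) / 3)) (min ((n : ℝ) ^ 2 / (k : ℝ) ^ 2) (k : ℝ)) := by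
    refine le_min (min_le_pow23 (by omega) (by omega)) ?_
    exact le_min (min_le_right _ _) (min_le_left _ _)
  apply Real.sSup_le
  · rintro x ⟨H, hHk, rfl⟩
    -- edge sum of H bounded by wgtN of its vertex finset
    have hfinv : H.verts.Finite := Set.toFinite _
    set A : Finset V := hfinv.toFinset with hA
    have hAcard : A.card = k := by
      rw [hA, ← Set.ncard_eq_toFinset_card H.verts hfinv, hHk]
    have hfine : H.edgeSet.Finite := Set.toFinite _
    have hsum : (∑ᶠ e ∈ H.edgeSet, ((w e : ℝ))) ≤ (wgtN G w A : ℝ) := by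
      rw [← hfine.coe_toFinset, finsum_mem_coe_finset]
      have hsub : hfine.toFinset ⊆
          Finset.univ.filter (fun e : Sym2 V => e ∈ G.edgeSet ∧ ∀ x ∈ e, x ∈ A) := by
        intro e he
        rw [Set.Finite.mem_toFinset] at he
        simp only [Finset.mem_filter, Finset.mem_univ, true_and]
        refine ⟨H.edgeSet_subset he, ?_⟩
        induction e using Sym2.ind with
        | _ a b =>
          have hadj : H.Adj a b := (SimpleGraph.Subgraph.mem_edgeSet).mp he
          intro x hx
          rcases Sym2.mem_iff.mp hx with rfl | rfl
          · rw [hA, Set.Finite.mem_toFinset]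
            exact H.edge_vert hadj
          · rw [hA, Set.Finite.mem_toFinset]
            exact H.edge_vert hadj.symm
      have : ∑ e ∈ hfine.toFinset, ((w e : ℝ)) =
          ((∑ e ∈ hfine.toFinset, w e : ℕ) : ℝ) := by push_cast; rfl
      rw [this, wgtN]
      exact_mod_cast Finset.sum_le_sum_of_subset hsub
    have hx : subWDensity (fun e => (w e : ℝ)) H = 2 * (∑ᶠ e ∈ H.edgeSet, ((w e : ℝ))) / (k:ℝ) := by
      rw [subWDensity, hHk]
    rw [hx, hind]
    have hb := hbound A hAcard
    calc 2 * (∑ᶠ e ∈ H.edgeSet, ((w e : ℝ))) / (k:ℝ)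
        ≤ 2 * (wgtN G w A : ℝ) / (k:ℝ) := by gcongr
      _ ≤ 2 * (1000000 * min ((k:ℝ)) ((n:ℝ)^2/(k:ℝ)^2) * (wgtN G w S : ℝ)) / (k:ℝ) := by
          gcongr
      _ = 1000000 * min ((k:ℝ)) ((n:ℝ)^2/(k:ℝ)^2) * (2 * (wgtN G w S : ℝ) / (k:ℝ)) := by
          ring
      _ ≤ 1000000 * min ((n : ℝ) ^ ((2 : ℝ) / 3)) (min ((n : ℝ) ^ 2 / (k : ℝ) ^ 2) (k : ℝ)) *
          (2 * (wgtN G w S : ℝ) / (k:ℝ)) := by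
          apply mul_le_mul_of_nonneg_right ?_ (by positivity)
          linarith [hminle]
  · positivity
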